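/- Let G and G' be finite groups of equal order and let U be a (G,G')-transformation matrix. Let S ⊆ G be the set of all a ∈ G whose row U_{a,·} has exactly one nonzero entry, and S' ⊆ G' the set of all b ∈ G' whose column U_{·,b} has exactly one nonzero entry. Define σ : S → S' by letting σ(a) be the unique b with U_{a,b} ≠ 0, and set χ(a) = U_{a,σ(a)} for a ∈ S and χ'(b) = U_{σ⁻¹(b),b} for b ∈ S'. Then S and S' are subgroups of G and G' respectively, σ is a group isomorphism from S to S', and χ and χ' are linear characters of S and S' respectively (i.e., group homomorphisms into the complex numbers of modulus 1). -/

import Mathlib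

open scoped BigOperators Classical

/-- A `(G,G')`-transformation matrix: `U` is unitary, `conj U_{a,b} = U_{a⁻¹,b⁻¹}`, and
`U_{ab,c} = ∑_{x y = c} U_{a,x} U_{b,y}`. -/
def IsTransMat {G G' : Type*} [Group G] [Group G'] [Fintype G] [Fintype G']
    [DecidableEq G] [DecidableEq G'] (U : Matrix G G' ℂ) : Prop :=
  (U * U.conjTranspose = 1 ∧ U.conjTranspose * U = 1) ∧
  (∀ (a : G) (b : G'), star (U a b) = U a⁻¹ b⁻¹) ∧
  (∀ (a b : G) (c : G'),
    U (a * b) c = ∑ x : G', ∑ y : G', if x * y = c then U a x * U b y else 0)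

/-- A quasi-regular representation of `G` by `d × d` complex matrices: a group
homomorphism into the unitary matrices with `tr(ρ(g)† ρ(h)) = 0` for all `g ≠ h`,
where `tr` is the normalized trace `Tr(M)/d`. -/
def IsQuasiRegular (G : Type*) [Group G] (d : ℕ)
    (ρ : G → Matrix (Fin d) (Fin d) ℂ) : Prop :=
  (ρ 1 = 1) ∧
  (∀ g h : G, ρ (g * h) = ρ g * ρ h) ∧
  (∀ g : G, (ρ g).conjTranspose * ρ g = 1 ∧ ρ g * (ρ g).conjTranspose = 1) ∧
  (∀ g h : G, g ≠ h → Matrix.trace ((ρ g).conjTranspose * ρ h) / (d : ℂ) = 0)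

section Aux

variable {G G' : Type*} [Group G] [Group G'] [Fintype G] [Fintype G']
    [DecidableEq G] [DecidableEq G'] {U : Matrix G G' ℂ}

private lemma sum_aux {ι : Type*} [Fintype ι] {f : ι → ℝ} (h0 : ∀ i, 0 ≤ f i)
    (h1 : ∑ i, f i = 1) {b : ι} (hb : f b = 1) {c : ι} (hc : c ≠ b) : f c = 0 := by
  have h2 : ∑ i ∈ Finset.univ.erase b, f i = 0 := by
    have h3 := Finset.sum_erase_add Finset.univ f (Finset.mem_univ b)
    rw [h1, hb] at h3; linarith
  exact (Finset.sum_eq_zero_iff_of_nonneg (fun i _ => h0 i)).mp h2 c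
    (Finset.mem_erase.mpr ⟨hc, Finset.mem_univ c⟩)

private lemma rowSum (hU : IsTransMat U) (a : G) : ∑ b, Complex.normSq (U a b) = 1 := by
  have h := congrFun (congrFun hU.1.1 a) a
  rw [Matrix.mul_apply, Matrix.one_apply_eq] at h
  simp only [Matrix.conjTranspose_apply, Complex.star_def, Complex.mul_conj] at h
  exact_mod_cast h

private lemma colSum (hU : IsTransMat U) (b : G') : ∑ a, Complex.normSq (U a b) = 1 := by
  have h := congrFun (congrFun hU.1.2 b) b
  rw [Matrix.mul_apply, Matrix.one_apply_eq] at h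
  simp only [Matrix.conjTranspose_apply, Complex.star_def] at h
  have h2 : ∀ a : G, (starRingEnd ℂ) (U a b) * U a b = (Complex.normSq (U a b) : ℂ) := by
    intro a; rw [mul_comm, Complex.mul_conj]
  rw [Finset.sum_congr rfl (fun a _ => h2 a)] at h
  exact_mod_cast h

private lemma rowZero (hU : IsTransMat U) {a : G} {b : G'}
    (h1 : Complex.normSq (U a b) = 1) {c : G'} (hc : c ≠ b) : U a c = 0 :=
  Complex.normSq_eq_zero.mp
    (sum_aux (fun i => Complex.normSq_nonneg (U a i)) (rowSum hU a) h1 hc)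

private lemma colZero (hU : IsTransMat U) {a : G} {b : G'}
    (h1 : Complex.normSq (U a b) = 1) {x : G} (hx : x ≠ a) : U x b = 0 :=
  Complex.normSq_eq_zero.mp
    (sum_aux (fun i => Complex.normSq_nonneg (U i b)) (colSum hU b) h1 hx)

noncomputable def sig (U : Matrix G G' ℂ) (a : G) : G' :=
  if h : ∃! b, U a b ≠ 0 then h.choose else 1

private lemma sig_ne {a : G} (h : ∃! b, U a b ≠ 0) : U a (sig U a) ≠ 0 := by
  rw [sig, dif_pos h]; exact h.choose_spec.1

private lemma sig_uniq {a : G} (h : ∃! b, U a b ≠ 0) {c : G'} (hc : U a c ≠ 0) :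
    c = sig U a := by
  rw [sig, dif_pos h]; exact h.choose_spec.2 c hc

private lemma sig_normSq (hU : IsTransMat U) {a : G} (h : ∃! b, U a b ≠ 0) :
    Complex.normSq (U a (sig U a)) = 1 := by
  have hs : ∑ b', Complex.normSq (U a b') = Complex.normSq (U a (sig U a)) := by
    apply Finset.sum_eq_single
    · intro c _ hc
      have h0 : U a c = 0 := by by_contra h0; exact hc (sig_uniq h h0)
      simp [h0]
    · intro hm; exact absurd (Finset.mem_univ _) hm
  rw [← hs]; exact rowSum hU a

private lemma mem_S'_of (hU : IsTransMat U) {a : G} (h : ∃! b, U a b ≠ 0) :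
    ∃! x : G, U x (sig U a) ≠ 0 := by
  refine ⟨a, sig_ne h, fun x hx => ?_⟩
  by_contra hxa
  exact hx (colZero hU (sig_normSq hU h) hxa)

private lemma of_mem_S' (hU : IsTransMat U) {b : G'} (h : ∃! a : G, U a b ≠ 0) :
    ∃ a : G, (∃! c : G', U a c ≠ 0) ∧ sig U a = b := by
  obtain ⟨a, ha, huniq⟩ := h
  have hn : Complex.normSq (U a b) = 1 := by
    have hs : ∑ x, Complex.normSq (U x b) = Complex.normSq (U a b) := by
      apply Finset.sum_eq_single
      · intro x _ hx
        have h0 : U x b = 0 := by by_contra h0; exact hx (huniq x h0)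
        simp [h0]
      · intro hm; exact absurd (Finset.mem_univ _) hm
    rw [← hs]; exact colSum hU b
  have haS : ∃! c, U a c ≠ 0 := by
    refine ⟨b, ha, fun c hc => ?_⟩
    by_contra hcb
    exact hc (rowZero hU hn hcb)
  exact ⟨a, haS, (sig_uniq haS ha).symm⟩

private lemma U_one_one (hU : IsTransMat U) : U 1 1 = 1 := by
  have h := hU.2.2 1 1 1
  rw [one_mul] at h
  have h2 : ∀ x : G', (∑ y, if x * y = 1 then U 1 x * U 1 y else 0)
      = (Complex.normSq (U 1 x) : ℂ) := by
    intro x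
    rw [Finset.sum_eq_single x⁻¹]
    · rw [if_pos (mul_inv_cancel x)]
      have hs := hU.2.1 1 x
      rw [inv_one] at hs
      rw [← hs, Complex.star_def, Complex.mul_conj]
    · intro y _ hy
      rw [if_neg]
      intro hxy
      exact hy (eq_inv_of_mul_eq_one_right hxy)
    · intro hm; exact absurd (Finset.mem_univ _) hm
  rw [Finset.sum_congr rfl (fun x _ => h2 x)] at h
  rw [h]
  exact_mod_cast rowSum hU 1

private lemma one_memS (hU : IsTransMat U) : ∃! b : G', U 1 b ≠ 0 := by
  have h1 : Complex.normSq (U (1 : G) 1) = 1 := by rw [U_one_one hU]; simp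
  refine ⟨1, ?_, fun c hc => ?_⟩
  · show U (1 : G) (1 : G') ≠ 0
    rw [U_one_one hU]; exact one_ne_zero
  · by_contra hc1
    exact hc (rowZero hU h1 hc1)

private lemma sig_one (hU : IsTransMat U) : sig U (1 : G) = 1 :=
  (sig_uniq (one_memS hU) (by rw [U_one_one hU]; exact one_ne_zero)).symm

private lemma mul_key (hU : IsTransMat U) {a a' : G} (ha : ∃! b, U a b ≠ 0) (c : G') :
    U (a * a') c = U a (sig U a) * U a' ((sig U a)⁻¹ * c) := by
  rw [hU.2.2 a a' c]
  rw [Finset.sum_eq_single (sig U a)]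
  · rw [Finset.sum_eq_single ((sig U a)⁻¹ * c)]
    · rw [if_pos (by rw [mul_inv_cancel_left])]
    · intro y _ hy
      rw [if_neg]
      intro hxy
      exact hy (by rw [← hxy, inv_mul_cancel_left])
    · intro hm; exact absurd (Finset.mem_univ _) hm
  · intro x _ hx
    have h0 : U a x = 0 := by by_contra h0; exact hx (sig_uniq ha h0)
    apply Finset.sum_eq_zero
    intro y _
    simp [h0]
  · intro hm; exact absurd (Finset.mem_univ _) hm

private lemma mul_val (hU : IsTransMat U) {a a' : G} (ha : ∃! b, U a b ≠ 0) :
    U (a * a') (sig U a * sig U a') = U a (sig U a) * U a' (sig U a') := by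
  rw [mul_key hU ha, inv_mul_cancel_left]

private lemma mul_memS (hU : IsTransMat U) {a a' : G} (ha : ∃! b, U a b ≠ 0)
    (ha' : ∃! b, U a' b ≠ 0) : ∃! b : G', U (a * a') b ≠ 0 := by
  refine ⟨sig U a * sig U a', ?_, fun c hc => ?_⟩
  · show U (a * a') (sig U a * sig U a') ≠ 0
    rw [mul_val hU ha]; exact mul_ne_zero (sig_ne ha) (sig_ne ha')
  · have hc' : U (a * a') c ≠ 0 := hc
    rw [mul_key hU ha] at hc'
    have h2 := right_ne_zero_of_mul hc'
    have h3 := sig_uniq ha' h2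
    rw [← h3, mul_inv_cancel_left]

private lemma sig_mul (hU : IsTransMat U) {a a' : G} (ha : ∃! b, U a b ≠ 0)
    (ha' : ∃! b, U a' b ≠ 0) : sig U (a * a') = sig U a * sig U a' :=
  (sig_uniq (mul_memS hU ha ha')
    (by rw [mul_val hU ha]; exact mul_ne_zero (sig_ne ha) (sig_ne ha'))).symm

private lemma chi_mul (hU : IsTransMat U) {a a' : G} (ha : ∃! b, U a b ≠ 0)
    (ha' : ∃! b, U a' b ≠ 0) :
    U (a * a') (sig U (a * a')) = U a (sig U a) * U a' (sig U a') := by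
  rw [sig_mul hU ha ha', mul_val hU ha]

private lemma inv_row (hU : IsTransMat U) (a : G) (c : G') : U a⁻¹ c = star (U a c⁻¹) := by
  rw [hU.2.1 a c⁻¹, inv_inv]

private lemma inv_memS (hU : IsTransMat U) {a : G} (ha : ∃! b, U a b ≠ 0) :
    ∃! b : G', U a⁻¹ b ≠ 0 := by
  refine ⟨(sig U a)⁻¹, ?_, fun c hc => ?_⟩
  · show U a⁻¹ (sig U a)⁻¹ ≠ 0
    rw [inv_row hU, inv_inv]; exact star_ne_zero.mpr (sig_ne ha)
  · have hc' : U a⁻¹ c ≠ 0 := hc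
    rw [inv_row hU] at hc'
    have h2 := sig_uniq ha (star_ne_zero.mp hc')
    rw [← h2, inv_inv]

private lemma sig_inv (hU : IsTransMat U) {a : G} (ha : ∃! b, U a b ≠ 0) :
    sig U a⁻¹ = (sig U a)⁻¹ :=
  (sig_uniq (inv_memS hU ha)
    (by rw [inv_row hU, inv_inv]; exact star_ne_zero.mpr (sig_ne ha))).symm

private lemma chi_abs (hU : IsTransMat U) {a : G} (ha : ∃! b, U a b ≠ 0) :
    ‖U a (sig U a)‖ = 1 := by
  rw [Complex.norm_def, sig_normSq hU ha, Real.sqrt_one]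

end Aux

/-- For a `(G,G')`-transformation matrix `U`, the row indices with a
single nonzero entry form a subgroup `S ≤ G`, the column indices with a single nonzero
entry form a subgroup `S' ≤ G'`, the assignment `σ(a) :=` (the unique `b` with `U_{a,b} ≠ 0`)
is a group isomorphism from `S` to `S'`, and `χ(a) = U_{a,σ(a)}` and `χ'(b) = U_{σ⁻¹(b),b}`
are linear characters of `S` and `S'` (group homomorphisms into the unit circle). -/
theorem stmt17 {G G' : Type*} [Group G] [Group G'] [Fintype G] [Fintype G']
    [DecidableEq G] [DecidableEq G']
    (hcard : Fintype.card G = Fintype.card G')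
    (U : Matrix G G' ℂ) (hU : IsTransMat U) :
    ∃ (S : Subgroup G) (S' : Subgroup G') (σ : S ≃* S'),
      ((S : Set G) = {a : G | ∃! b : G', U a b ≠ 0}) ∧
      ((S' : Set G') = {b : G' | ∃! a : G, U a b ≠ 0}) ∧
      (∀ a : S, U (a : G) ((σ a : G')) ≠ 0) ∧
      (∀ a b : S,
        U ((a * b : S) : G) ((σ (a * b) : G')) = U (a : G) (σ a : G') * U (b : G) (σ b : G')) ∧
      (∀ a : S, ‖U (a : G) (σ a : G')‖ = 1) ∧
      (∀ b c : S',
        U ((σ.symm (b * c) : G)) (((b * c : S') : G')) =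
          U (σ.symm b : G) (b : G') * U (σ.symm c : G) (c : G')) ∧
      (∀ b : S', ‖U (σ.symm b : G) (b : G')‖ = 1) := by
  classical
  let S : Subgroup G :=
          { carrier := {a : G | ∃! b : G', U a b ≠ 0}
            one_mem' := one_memS hU
            mul_mem' := fun ha hb => mul_memS hU ha hb
            inv_mem' := fun ha => inv_memS hU ha }
  let S' : Subgroup G' :=
          { carrier := {b : G' | ∃! a : G, U a b ≠ 0}
            one_mem' := by
              have h := mem_S'_of hU (one_memS hU)
              rwa [sig_one hU] at h
            mul_mem' := by
              intro b c hb hc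
              obtain ⟨a, haS, hab⟩ := of_mem_S' hU hb
              obtain ⟨a', ha'S, ha'c⟩ := of_mem_S' hU hc
              have h := mem_S'_of hU (mul_memS hU haS ha'S)
              rwa [sig_mul hU haS ha'S, hab, ha'c] at h
            inv_mem' := by
              intro b hb
              obtain ⟨a, haS, hab⟩ := of_mem_S' hU hb
              have h := mem_S'_of hU (inv_memS hU haS)
              rwa [sig_inv hU haS, hab] at h }
  refine ⟨S, S', ?_⟩
  have hmemS : ∀ a : S, ∃! b : G', U (a : G) b ≠ 0 := fun a => a.2
  have hmemS' : ∀ b : S', ∃! a : G, U a (b : G') ≠ 0 := fun b => b.2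
  let f : S →* S' := {
    toFun := fun a => ⟨sig U (a : G), mem_S'_of hU (hmemS a)⟩
    map_one' := Subtype.ext (sig_one hU)
    map_mul' := fun a b => Subtype.ext (sig_mul hU (hmemS a) (hmemS b)) }
  have hf : ∀ a : S, ((f a : S') : G') = sig U (a : G) := fun a => rfl
  have hfinj : Function.Injective f := by
    intro a a' h
    have hb := mem_S'_of hU (hmemS a)
    apply Subtype.ext
    have h1 : sig U (a : G) = sig U (a' : G) := congrArg Subtype.val h
    exact (hb.unique (sig_ne (hmemS a)) (by rw [h1]; exact sig_ne (hmemS a'))).symm ▸ rfl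
  have hfsurj : Function.Surjective f := by
    intro b
    obtain ⟨a, haS, hab⟩ := of_mem_S' hU (hmemS' b)
    exact ⟨⟨a, haS⟩, Subtype.ext hab⟩
  let σ : S ≃* S' := MulEquiv.ofBijective f ⟨hfinj, hfsurj⟩
  have hσ : ∀ a : S, ((σ a : S') : G') = sig U (a : G) := fun a => rfl
  have hsymm : ∀ b : S', ((b : S') : G') = sig U ((σ.symm b : S) : G) := by
    intro b
    conv_lhs => rw [← σ.apply_symm_apply b]
    exact hσ _
  refine ⟨σ, rfl, rfl, ?_, ?_, ?_, ?_, ?_⟩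
  · intro a
    rw [hσ]
    exact sig_ne (hmemS a)
  · intro a b
    rw [hσ, hσ, hσ]
    show U ((a : G) * (b : G)) (sig U ((a : G) * (b : G))) = _
    exact chi_mul hU (hmemS a) (hmemS b)
  · intro a
    rw [hσ]
    exact chi_abs hU (hmemS a)
  · intro b c
    rw [hsymm b, hsymm c, hsymm (b * c)]
    have h1 : ((σ.symm (b * c) : S) : G) = ((σ.symm b : S) : G) * ((σ.symm c : S) : G) := by
      rw [map_mul]; rfl
    rw [h1]
    exact chi_mul hU (hmemS _) (hmemS _)
  · intro b
    rw [hsymm b]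
    exact chi_abs hU (hmemS _)
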